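/- An ideal I on ℕ is increasing-invariant if and only if for every B ∈ I, every C ⊆ ℕ, and every δ > 0 such that |C ∩ [0,n)| ≤ δ·|B ∩ [0,n)| for all n, we have C ∈ I. -/

import Mathlib

open Filter Finset Topology

/-- `cnt A n = |A ∩ [0,n)|`. -/
noncomputable def cnt (A : Set ℕ) (n : ℕ) : ℕ := (A ∩ Set.Iio n).ncard

/-- The simple density ideal associated to a weight `g`. -/
def Zg (g : ℕ → ℝ) : Set (Set ℕ) :=
  {A | Tendsto (fun n => (cnt A n : ℝ) / g n) atTop (𝓝 0)}

/-- The ideal of asymptotic density zero sets. -/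
def Zid : Set (Set ℕ) :=
  {A | Tendsto (fun n => (cnt A n : ℝ) / n) atTop (𝓝 0)}

/-- An ideal is increasing-invariant. -/
def IncInv (I : Set (Set ℕ)) : Prop :=
  ∀ B ∈ I, ∀ C : Set ℕ, (∀ n, cnt C n ≤ cnt B n) → C ∈ I

/-- Tallness. -/
def Tall (I : Set (Set ℕ)) : Prop :=
  ∀ A : Set ℕ, A.Infinite → ∃ B ⊆ A, B.Infinite ∧ B ∈ I

/-- The conditions on `f` for the Erdős–Ulam ideal `EU f` to be defined. -/
def EUcond (f : ℕ → ℝ) : Prop :=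
  (∀ n, 0 ≤ f n) ∧ Tendsto (fun n => ∑ i ∈ Finset.range n, f i) atTop atTop ∧
    Tendsto (fun n => f n / ∑ i ∈ Finset.range (n + 1), f i) atTop (𝓝 0)

/-- The Erdős–Ulam ideal associated to `f`. -/
def EU (f : ℕ → ℝ) : Set (Set ℕ) :=
  {A | Tendsto
    (fun n => (∑ i ∈ Finset.range n, Set.indicator A f i) / ∑ i ∈ Finset.range n, f i)
    atTop (𝓝 0)}

/-- Being an Erdős–Ulam ideal. -/
def IsEUIdeal (I : Set (Set ℕ)) : Prop := ∃ f : ℕ → ℝ, EUcond f ∧ I = EU f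
lemma cnt_fin (A : Set ℕ) (n : ℕ) : (A ∩ Set.Iio n).Finite :=
  (Set.finite_Iio n).inter_of_right A

lemma cnt_strict {C : Set ℕ} {x y : ℕ} (hx : x ∈ C) (hxy : x < y) : cnt C x < cnt C y := by
  apply Set.ncard_lt_ncard _ (cnt_fin C y)
  constructor
  · exact Set.inter_subset_inter_right C (Set.Iio_subset_Iio hxy.le)
  · intro h
    exact absurd (h ⟨hx, hxy⟩).2 (lt_irrefl x)

/-- increasing-invariance is equivalent to its version with a
multiplicative constant `δ`. -/
theorem stmt_6 (I : Set (Set ℕ))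
    (hsub : ∀ A ∈ I, ∀ B ⊆ A, B ∈ I)
    (hun : ∀ A ∈ I, ∀ B ∈ I, A ∪ B ∈ I)
    (hfin : ∀ A : Set ℕ, A.Finite → A ∈ I)
    (hproper : Set.univ ∉ I) :
    IncInv I ↔ ∀ B ∈ I, ∀ C : Set ℕ, ∀ δ : ℝ, 0 < δ →
      (∀ n, (cnt C n : ℝ) ≤ δ * (cnt B n : ℝ)) → C ∈ I := by
  constructor
  · intro hinc B hB C δ hδ hCB
    obtain ⟨k, hk, hkle⟩ : ∃ k : ℕ, 0 < k ∧ δ ≤ (k : ℝ) :=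
      ⟨⌈δ⌉₊, Nat.ceil_pos.2 hδ, Nat.le_ceil δ⟩
    -- cnt C n ≤ k * cnt B n
    have hkey : ∀ n, cnt C n ≤ k * cnt B n := by
      intro n
      have h1 : (cnt C n : ℝ) ≤ (k : ℝ) * (cnt B n : ℝ) :=
        le_trans (hCB n) (mul_le_mul_of_nonneg_right hkle (Nat.cast_nonneg _))
      exact_mod_cast h1
    set D : ℕ → Set ℕ := fun j => {x | x ∈ C ∧ cnt C x % k = j} with hDdef
    -- each D j is dominated by B
    have hDj : ∀ j, ∀ n, cnt (D j) n ≤ cnt B n := by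
      intro j n
      have hb : (Set.Iio (cnt B n)).ncard = cnt B n := by
        rw [← Finset.coe_Iio, Set.ncard_coe_finset, Nat.card_Iio]
      calc cnt (D j) n ≤ (Set.Iio (cnt B n)).ncard := by
            apply Set.ncard_le_ncard_of_injOn (fun x => cnt C x / k)
            · rintro x ⟨⟨hxC, _⟩, hxn⟩
              have h1 : cnt C x < cnt C n := cnt_strict hxC hxn
              have h2 : cnt C x < cnt B n * k := by
                calc cnt C x < cnt C n := h1
                _ ≤ k * cnt B n := hkey n
                _ = cnt B n * k := Nat.mul_comm _ _
              exact (Nat.div_lt_iff_lt_mul hk).2 h2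
            · rintro x ⟨⟨hxC, hxj⟩, hxn⟩ y ⟨⟨hyC, hyj⟩, hyn⟩ hdiv
              have hdiv' : cnt C x / k = cnt C y / k := by simpa only using hdiv
              clear hdiv
              have heq : cnt C x = cnt C y := by
                rw [← Nat.div_add_mod (cnt C x) k, ← Nat.div_add_mod (cnt C y) k,
                  hdiv', hxj, hyj]
              rcases lt_trichotomy x y with h | h | h
              case inl => exact absurd heq (Nat.ne_of_lt (cnt_strict hxC h))
              case inr.inl => exact h
              case inr.inr => exact absurd heq.symm (Nat.ne_of_lt (cnt_strict hyC h))
        _ = cnt B n := hb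
    have hDI : ∀ j, D j ∈ I := fun j => hinc B hB (D j) (hDj j)
    -- C is contained in the union of D j for j < k
    have hcover : C ⊆ ⋃ j ∈ Finset.range k, D j := by
      intro x hx
      simp only [Set.mem_iUnion]
      exact ⟨cnt C x % k, by simpa using Nat.mod_lt _ hk, hx, rfl⟩
    -- finite unions stay in I
    have hunion : ∀ s : Finset ℕ, (⋃ j ∈ s, D j) ∈ I := by
      intro s
      induction s using Finset.induction_on with
      | empty => simpa using hfin ∅ Set.finite_empty
      | insert a s hni ih =>
        rw [Finset.set_biUnion_insert]
        exact hun _ (hDI a) _ ih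
    exact hsub _ (hunion (Finset.range k)) C hcover
  · intro h B hB C hCB
    apply h B hB C 1 one_pos
    intro n
    rw [one_mul]
    exact_mod_cast hCB n
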